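/- For the HD line network with K IAB nodes, backhaul capacity R_b, access capacity R_a, w UEs per BS: the optimal LP value satisfies t*_HD(λ_min, K) = (1 - wλ_min(3/R_b + 1/R_a)) / (2(K+1)/R_b + Kw/R_a) when λ_min ≤ R_a / (4(K+1)(R_a/R_b)² + (2K+3)w(R_a/R_b) + w), and t*_HD(λ_min, K) = (1 - wλ_min((2K-1)/R_b + 1/R_a)) / (2(K+1)/R_b + 2w/R_a) otherwise; i.e., min_{1≤k≤K-1} f_HD(k) equals f_HD(K-1) in the first case and f_HD(1) in the second. -/
import Mathlib


/-- Bottleneck function `f_HD(k)` for the HD line network. -/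
noncomputable def fHD (K w : ℕ) (lam Ra Rb : ℝ) (k : ℕ) : ℝ :=
  if k = 0 then
    (1 - w * lam * (1 / Ra + K / Rb)) / ((K + 1) / Rb + w / Ra)
  else if k = K then
    (1 - w * lam * (1 / Ra + 1 / Rb)) / ((K + 1) / Rb + w * (K + 1) / Ra)
  else
    (1 - w * lam * (1 / Ra + (2 * ((K : ℝ) - k) + 1) / Rb)) /
      (2 * (K + 1) / Rb + w * (k + 1) / Ra)

set_option maxHeartbeats 800000 in
/-- `t*_HD(λ_min, K)`: the minimum of `f_HD` over interior indices `1 ≤ k ≤ K-1`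
is attained at `k = K-1` with value `(1 - wλ(3/R_b + 1/R_a))/(2(K+1)/R_b + Kw/R_a)`
when `λ ≤ R_a/(4(K+1)(R_a/R_b)² + (2K+3)w(R_a/R_b) + w)`, and at `k = 1` with value
`(1 - wλ((2K-1)/R_b + 1/R_a))/(2(K+1)/R_b + 2w/R_a)` otherwise. -/
theorem tstar_HD_closed_form
    (K w : ℕ) (hK : 2 ≤ K) (hw : 1 ≤ w)
    (lam Ra Rb : ℝ) (hlam : 0 < lam) (hRa : 0 < Ra) (hRb : Ra < Rb)
    (hnum : 0 < 1 - (w : ℝ) * lam * (1 / Ra + (2 * (K : ℝ) - 1) / Rb)) :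
    (lam ≤ Ra / (4 * ((K : ℝ) + 1) * (Ra / Rb) ^ 2 + (2 * K + 3) * w * (Ra / Rb) + w) →
      (∀ k, 1 ≤ k → k ≤ K - 1 → fHD K w lam Ra Rb (K - 1) ≤ fHD K w lam Ra Rb k) ∧
      fHD K w lam Ra Rb (K - 1) =
        (1 - w * lam * (3 / Rb + 1 / Ra)) / (2 * ((K : ℝ) + 1) / Rb + K * w / Ra)) ∧
    (Ra / (4 * ((K : ℝ) + 1) * (Ra / Rb) ^ 2 + (2 * K + 3) * w * (Ra / Rb) + w) < lam →
      (∀ k, 1 ≤ k → k ≤ K - 1 → fHD K w lam Ra Rb 1 ≤ fHD K w lam Ra Rb k) ∧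
      fHD K w lam Ra Rb 1 =
        (1 - w * lam * ((2 * (K : ℝ) - 1) / Rb + 1 / Ra)) /
          (2 * ((K : ℝ) + 1) / Rb + 2 * w / Ra)) := by
  have hRb0 : (0:ℝ) < Rb := hRa.trans hRb
  have hw0 : (0:ℝ) < (w:ℝ) := by exact_mod_cast hw
  have hK2 : (2:ℝ) ≤ (K:ℝ) := by exact_mod_cast hK
  have hRa' : Ra ≠ 0 := ne_of_gt hRa
  have hRb' : Rb ≠ 0 := ne_of_gt hRb0
  set A : ℝ := 1 - w * lam * (1/Ra + (2*(K:ℝ)+1)/Rb) with hA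
  set B : ℝ := 2*w*lam/Rb with hB
  set C : ℝ := 2*((K:ℝ)+1)/Rb + w/Ra with hC
  set E : ℝ := (w:ℝ)/Ra with hE
  set D : ℝ := 4 * ((K : ℝ) + 1) * (Ra / Rb) ^ 2 + (2 * K + 3) * w * (Ra / Rb) + w with hDdef
  have hD0 : 0 < D := by
    rw [hDdef]
    have h1 : (0:ℝ) < Ra / Rb := div_pos hRa hRb0
    have h2 : (0:ℝ) ≤ (K:ℝ) := Nat.cast_nonneg K
    positivity
  have hDen : ∀ x : ℝ, 0 ≤ x → 0 < C + E * x := by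
    intro x hx
    have hC0 : 0 < C := by
      rw [hC]
      have h2 : (0:ℝ) ≤ (K:ℝ) := Nat.cast_nonneg K
      positivity
    have hE0 : 0 < E := by rw [hE]; positivity
    nlinarith
  have hform : ∀ k : ℕ, 1 ≤ k → k ≤ K - 1 →
      fHD K w lam Ra Rb k = (A + B * k) / (C + E * k) := by
    intro k hk1 hk2
    have h0 : k ≠ 0 := by omega
    have hKne : k ≠ K := by omega
    simp only [fHD, if_neg h0, if_neg hKne]
    rw [hA, hB, hC, hE]
    congr 1 <;> field_simp <;> ring
  have hcmp : ∀ x y : ℝ, 0 ≤ x → 0 ≤ y → (x - y) * (B * C - A * E) ≤ 0 →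
      (A + B * x) / (C + E * x) ≤ (A + B * y) / (C + E * y) := by
    intro x y hx hy h
    rw [div_le_div_iff₀ (hDen x hx) (hDen y hy)]
    nlinarith [h]
  have hid : A * E - B * C = w / Ra ^ 2 * (Ra - lam * D) := by
    rw [hA, hB, hC, hE, hDdef]
    field_simp
    ring
  have hKm1 : ((K - 1 : ℕ) : ℝ) = (K:ℝ) - 1 := by
    have : 1 ≤ K := by omega
    push_cast [Nat.cast_sub this]
    ring
  constructor
  · intro hle
    have hRaD : lam * D ≤ Ra := by
      rw [le_div_iff₀ hD0] at hle
      linarith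
    have hsign : B * C - A * E ≤ 0 := by
      have : 0 ≤ A * E - B * C := by
        rw [hid]
        have : 0 ≤ Ra - lam * D := by linarith
        positivity
      linarith
    constructor
    · intro k hk1 hk2
      rw [hform (K-1) (by omega) le_rfl, hform k hk1 hk2]
      apply hcmp _ _ (Nat.cast_nonneg _) (Nat.cast_nonneg _)
      have hxy : (0:ℝ) ≤ ((K-1:ℕ):ℝ) - (k:ℝ) := by
        have : (k:ℝ) ≤ ((K-1:ℕ):ℝ) := by exact_mod_cast hk2
        linarith
      exact mul_nonpos_of_nonneg_of_nonpos hxy hsign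
    · rw [hform (K-1) (by omega) le_rfl, hA, hB, hC, hE, hKm1]
      congr 1 <;> ring
  · intro hlt
    have hRaD : Ra < lam * D := by
      rw [div_lt_iff₀ hD0] at hlt
      linarith
    have hsign : 0 ≤ B * C - A * E := by
      have : A * E - B * C ≤ 0 := by
        rw [hid]
        have h1 : Ra - lam * D ≤ 0 := by linarith
        have h2 : (0:ℝ) ≤ w / Ra ^ 2 := by positivity
        exact mul_nonpos_of_nonneg_of_nonpos h2 h1
      linarith
    constructor
    · intro k hk1 hk2
      rw [hform 1 le_rfl (by omega), hform k hk1 hk2]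
      apply hcmp _ _ (Nat.cast_nonneg _) (Nat.cast_nonneg _)
      have hxy : ((1:ℕ):ℝ) - (k:ℝ) ≤ 0 := by
        have : (1:ℝ) ≤ (k:ℝ) := by exact_mod_cast hk1
        push_cast
        linarith
      exact mul_nonpos_of_nonpos_of_nonneg hxy hsign
    · rw [hform 1 le_rfl (by omega), hA, hB, hC, hE]
      push_cast
      congr 1 <;> ring
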